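/- (Finiteness of operator-norm moments of the geometric-Brownian-motion factor.) Let A, B_1, …, B_m ∈ ℝ^{d×d}, set C := A − (1/2)∑_{i=1}^m B_i², and let r ≥ 1 and τ ≥ 0. For any probability space (Ω, 𝓕, P) and any mutually independent real random variables Z_1, …, Z_m each with Gaussian law N(0, τ), one has E[‖exp(C·τ + ∑_{i=1}^m Z_i·B_i)‖^r] ≤ 2^m · exp(r‖C‖τ + (r²τ/2)·∑_{i=1}^m ‖B_i‖²); in particular this moment is finite. -/

import Mathlib

open MeasureTheory ProbabilityTheory
open scoped NNReal ENNReal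

/-- The operator norm of a matrix, acting on Euclidean space. -/
noncomputable def matOpNorm {d : ℕ} (M : Matrix (Fin d) (Fin d) ℝ) : ℝ :=
  ‖Matrix.toEuclideanCLM (𝕜 := ℝ) M‖

lemma aux_lintegral_prod {Ω : Type} [MeasurableSpace Ω] (P : Measure Ω) [IsProbabilityMeasure P]
    {m : ℕ} (f : Fin m → Ω → ℝ≥0∞) (hmeas : ∀ i, Measurable (f i))
    (hindep : iIndepFun f P) (s : Finset (Fin m)) :
    ∫⁻ ω, ∏ i ∈ s, f i ω ∂P = ∏ i ∈ s, ∫⁻ ω, f i ω ∂P := by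
  induction s using Finset.induction with
  | empty => simp
  | @insert a s ha ih =>
    simp_rw [Finset.prod_insert ha]
    rw [← ih]
    have hind : IndepFun (∏ j ∈ s, f j) (f a) P :=
      hindep.indepFun_finsetProd_of_notMem hmeas ha
    have hprodmeas : Measurable (∏ j ∈ s, f j) := by
      have := Finset.measurable_prod s fun i (_ : i ∈ s) => hmeas i
      simpa [Finset.prod_fn] using this
    have := lintegral_mul_eq_lintegral_mul_lintegral_of_indepFun hprodmeas (hmeas a) hind
    simp only [Pi.mul_apply, Finset.prod_apply] at this
    calc ∫⁻ ω, f a ω * ∏ i ∈ s, f i ω ∂P = ∫⁻ ω, (∏ i ∈ s, f i ω) * f a ω ∂P := by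
          simp_rw [mul_comm]
      _ = (∫⁻ ω, ∏ i ∈ s, f i ω ∂P) * ∫⁻ ω, f a ω ∂P := this
      _ = (∫⁻ ω, f a ω ∂P) * ∫⁻ ω, ∏ i ∈ s, f i ω ∂P := mul_comm _ _


lemma aux_meas_exp_mul (t : ℝ) : Measurable fun x : ℝ => ENNReal.ofReal (Real.exp (t * x)) :=
  (Real.measurable_exp.comp (measurable_id.const_mul t)).ennreal_ofReal

lemma aux_norm_exp_le {𝔸 : Type*} [NormedRing 𝔸] [NormedAlgebra ℝ 𝔸] [CompleteSpace 𝔸]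
    (hone : ‖(1:𝔸)‖ ≤ 1) (x : 𝔸) : ‖NormedSpace.exp x‖ ≤ Real.exp ‖x‖ := by
  rw [NormedSpace.exp_eq_tsum ℝ]
  have hsum := NormedSpace.norm_expSeries_summable' (𝕂 := ℝ) x
  refine (norm_tsum_le_tsum_norm hsum).trans ?_
  rw [Real.exp_eq_exp_ℝ, NormedSpace.exp_eq_tsum ℝ]
  have hterm : ∀ n : ℕ, ‖((n.factorial : ℝ))⁻¹ • x ^ n‖
      ≤ ((n.factorial : ℝ))⁻¹ • ‖x‖ ^ n := by
    intro n
    rw [norm_smul, Real.norm_eq_abs, abs_of_nonneg (by positivity), smul_eq_mul]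
    have hx : ‖x ^ n‖ ≤ ‖x‖ ^ n := by
      cases n with
      | zero => simpa using hone
      | succ n => exact norm_pow_le' x n.succ_pos
    exact mul_le_mul_of_nonneg_left hx (by positivity)
  exact Summable.tsum_le_tsum hterm hsum (NormedSpace.expSeries_summable' (𝕂 := ℝ) (‖x‖ : ℝ))

lemma aux_toEuclideanCLM_exp (d : ℕ) (M : Matrix (Fin d) (Fin d) ℝ) :
    Matrix.toEuclideanCLM (𝕜 := ℝ) (NormedSpace.exp M)
      = NormedSpace.exp (Matrix.toEuclideanCLM (𝕜 := ℝ) M) := by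
  set e := Matrix.toEuclideanCLM (𝕜 := ℝ) (n := Fin d) with he
  have hs := NormedSpace.exp_series_hasSum_exp' (𝕂 := ℝ) (e M)
  have hcont : Continuous (⇑(e.symm)) :=
    LinearMap.continuous_of_finiteDimensional
      ({ toFun := ⇑(e.symm), map_add' := by simp, map_smul' := by simp } :
        (EuclideanSpace ℝ (Fin d) →L[ℝ] EuclideanSpace ℝ (Fin d)) →ₗ[ℝ] Matrix (Fin d) (Fin d) ℝ)
  have h2 := hs.map e.symm hcont
  have h3 : HasSum (fun n : ℕ => ((n.factorial : ℝ))⁻¹ • M ^ n)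
      (e.symm (NormedSpace.exp (e M))) := by
    refine h2.congr_fun fun n => ?_
    simp [Function.comp, _root_.map_smul, _root_.map_pow]
  have h4 : NormedSpace.exp M = e.symm (NormedSpace.exp (e M)) := by
    rw [NormedSpace.exp_eq_tsum ℝ]
    exact h3.tsum_eq
  rw [h4, StarAlgEquiv.apply_symm_apply]

lemma aux_matOpNorm_exp_le {d : ℕ} (M : Matrix (Fin d) (Fin d) ℝ) :
    matOpNorm (NormedSpace.exp M) ≤ Real.exp (matOpNorm M) := by
  rw [matOpNorm, aux_toEuclideanCLM_exp]
  exact aux_norm_exp_le ContinuousLinearMap.norm_id_le _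

lemma aux_gauss_mgf (v : ℝ≥0) (t : ℝ) :
    ∫⁻ x, ENNReal.ofReal (Real.exp (t * x)) ∂(gaussianReal 0 v)
      = ENNReal.ofReal (Real.exp (v * t ^ 2 / 2)) := by
  by_cases hv : v = 0
  · subst hv
    rw [gaussianReal_zero_var, lintegral_dirac' _ (aux_meas_exp_mul t)]
    simp
  · have hv' : (v : ℝ) ≠ 0 := by exact_mod_cast hv
    rw [gaussianReal_of_var_ne_zero _ hv,
      lintegral_withDensity_eq_lintegral_mul _ (measurable_gaussianPDF _ _) (aux_meas_exp_mul t)]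
    have hpt : ∀ x : ℝ, (gaussianPDF 0 v * fun x => ENNReal.ofReal (Real.exp (t * x))) x
        = ENNReal.ofReal (Real.exp ((v:ℝ) * t ^ 2 / 2)) * gaussianPDF ((v:ℝ) * t) v x := by
      intro x
      simp only [Pi.mul_apply, gaussianPDF]
      rw [← ENNReal.ofReal_mul (gaussianPDFReal_nonneg _ _ _),
        ← ENNReal.ofReal_mul (Real.exp_nonneg _)]
      congr 1
      simp only [gaussianPDFReal]
      conv_rhs => rw [mul_comm, mul_assoc, ← Real.exp_add]
      conv_lhs => rw [mul_assoc, ← Real.exp_add]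
      congr 1
      field_simp
      ring
    simp_rw [hpt]
    rw [lintegral_const_mul _ (measurable_gaussianPDF _ _), lintegral_gaussianPDF_eq_one _ hv,
      mul_one]

lemma aux_gauss_abs_mgf_le (v : ℝ≥0) (t : ℝ) :
    ∫⁻ x, ENNReal.ofReal (Real.exp (t * |x|)) ∂(gaussianReal 0 v)
      ≤ ENNReal.ofReal (2 * Real.exp (v * t ^ 2 / 2)) := by
  have hb : ∀ x : ℝ, ENNReal.ofReal (Real.exp (t * |x|))
      ≤ ENNReal.ofReal (Real.exp (t * x)) + ENNReal.ofReal (Real.exp (-t * x)) := by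
    intro x
    rcases abs_choice x with h | h
    · rw [h]
      exact self_le_add_right _ _
    · rw [h, show t * -x = -t * x by ring]
      exact self_le_add_left _ _
  calc ∫⁻ x, ENNReal.ofReal (Real.exp (t * |x|)) ∂(gaussianReal 0 v)
      ≤ ∫⁻ x, (ENNReal.ofReal (Real.exp (t * x)) + ENNReal.ofReal (Real.exp (-t * x)))
          ∂(gaussianReal 0 v) := lintegral_mono hb
    _ = ENNReal.ofReal (Real.exp (v * t ^ 2 / 2)) + ENNReal.ofReal (Real.exp (v * (-t) ^ 2 / 2)) := by
        rw [lintegral_add_left (aux_meas_exp_mul t), aux_gauss_mgf, aux_gauss_mgf]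
    _ = ENNReal.ofReal (2 * Real.exp (v * t ^ 2 / 2)) := by
        rw [neg_pow, ← ENNReal.ofReal_add (Real.exp_nonneg _) (Real.exp_nonneg _)]
        norm_num
        ring_nf
        rw [ENNReal.ofReal_mul' (by norm_num), ENNReal.ofReal_ofNat]

lemma matOpNorm_nonneg {d : ℕ} (M : Matrix (Fin d) (Fin d) ℝ) : 0 ≤ matOpNorm M :=
  norm_nonneg _


set_option maxHeartbeats 1000000 in
set_option synthInstance.maxHeartbeats 400000 in
/-- finiteness (with an explicit bound) of operator-norm moments of the
geometric-Brownian-motion factor. -/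
theorem gbm_factor_opNorm_moment_bound (d m : ℕ)
    (A : Matrix (Fin d) (Fin d) ℝ) (B : Fin m → Matrix (Fin d) (Fin d) ℝ)
    (C : Matrix (Fin d) (Fin d) ℝ) (hC : C = A - (1 / 2 : ℝ) • ∑ i, B i ^ 2)
    (r : ℝ) (hr : 1 ≤ r) (τ : ℝ≥0)
    (Ω : Type) [MeasurableSpace Ω] (P : Measure Ω) [IsProbabilityMeasure P]
    (Z : Fin m → Ω → ℝ) (hZmeas : ∀ i, Measurable (Z i))
    (hZlaw : ∀ i, P.map (Z i) = gaussianReal 0 τ)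
    (hindep : iIndepFun Z P) :
    ∫⁻ ω, ENNReal.ofReal
        (matOpNorm (NormedSpace.exp ((τ : ℝ) • C + ∑ i, Z i ω • B i)) ^ r) ∂P
      ≤ ENNReal.ofReal (2 ^ m *
          Real.exp (r * matOpNorm C * τ + (r ^ 2 * τ / 2) * ∑ i, matOpNorm (B i) ^ 2)) := by
  have hr0 : (0:ℝ) ≤ r := le_trans zero_le_one hr
  -- pointwise bound on the matrix norm
  have hnorm : ∀ ω, matOpNorm ((τ : ℝ) • C + ∑ i, Z i ω • B i)
      ≤ (τ:ℝ) * matOpNorm C + ∑ i, |Z i ω| * matOpNorm (B i) := by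
    intro ω
    have h1 : matOpNorm ((τ : ℝ) • C + ∑ i, Z i ω • B i)
        = ‖(τ:ℝ) • Matrix.toEuclideanCLM (𝕜 := ℝ) C
          + ∑ i, Z i ω • Matrix.toEuclideanCLM (𝕜 := ℝ) (B i)‖ := by
      rw [matOpNorm]
      congr 1
      simp [map_add, _root_.map_smul, map_sum]
    rw [h1]
    refine (norm_add_le _ _).trans (add_le_add ?_ ?_)
    · have h := norm_smul (τ:ℝ) (Matrix.toEuclideanCLM (𝕜 := ℝ) C)
      rw [Real.norm_eq_abs, abs_of_nonneg τ.coe_nonneg] at h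
      exact h.le
    · refine (norm_sum_le _ _).trans ?_
      refine Finset.sum_le_sum fun i _ => ?_
      have h := norm_smul (Z i ω) (Matrix.toEuclideanCLM (𝕜 := ℝ) (B i))
      rw [Real.norm_eq_abs] at h
      exact h.le
  -- the independent factors
  set φ : Fin m → ℝ → ℝ≥0∞ :=
    fun i x => ENNReal.ofReal (Real.exp ((r * matOpNorm (B i)) * |x|)) with hφ
  have hφmeas : ∀ i, Measurable (φ i) := fun i =>
    (Real.measurable_exp.comp (measurable_abs.const_mul _)).ennreal_ofReal
  set g : Fin m → Ω → ℝ≥0∞ := fun i ω => φ i (Z i ω) with hg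
  have hgmeas : ∀ i, Measurable (g i) := fun i => (hφmeas i).comp (hZmeas i)
  have hgindep : iIndepFun g P := hindep.comp φ hφmeas
  -- pointwise bound on the integrand
  have hpt : ∀ ω, ENNReal.ofReal
        (matOpNorm (NormedSpace.exp ((τ : ℝ) • C + ∑ i, Z i ω • B i)) ^ r)
      ≤ ENNReal.ofReal (Real.exp (r * matOpNorm C * τ)) * ∏ i, g i ω := by
    intro ω
    have h2 : matOpNorm (NormedSpace.exp ((τ : ℝ) • C + ∑ i, Z i ω • B i)) ^ r
        ≤ Real.exp (r * ((τ:ℝ) * matOpNorm C + ∑ i, |Z i ω| * matOpNorm (B i))) := by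
      calc matOpNorm (NormedSpace.exp ((τ : ℝ) • C + ∑ i, Z i ω • B i)) ^ r
          ≤ (Real.exp ((τ:ℝ) * matOpNorm C + ∑ i, |Z i ω| * matOpNorm (B i))) ^ r :=
            Real.rpow_le_rpow (matOpNorm_nonneg _)
              ((aux_matOpNorm_exp_le _).trans (Real.exp_le_exp.mpr (hnorm ω))) hr0
        _ = Real.exp (((τ:ℝ) * matOpNorm C + ∑ i, |Z i ω| * matOpNorm (B i)) * r) :=
            (Real.exp_mul _ r).symm
        _ = _ := by rw [mul_comm]
    refine le_trans (ENNReal.ofReal_le_ofReal h2) ?_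
    have h3 : r * ((τ:ℝ) * matOpNorm C + ∑ i, |Z i ω| * matOpNorm (B i))
        = r * matOpNorm C * τ + ∑ i, (r * matOpNorm (B i)) * |Z i ω| := by
      rw [mul_add, Finset.mul_sum]
      refine congrArg₂ (· + ·) (by ring) (Finset.sum_congr rfl fun i _ => by ring)
    rw [h3, Real.exp_add, Real.exp_sum, ENNReal.ofReal_mul (Real.exp_nonneg _),
      ENNReal.ofReal_prod_of_nonneg (fun i _ => Real.exp_nonneg _)]
  -- bound for each factor
  have hgint : ∀ i, ∫⁻ ω, g i ω ∂P
      ≤ ENNReal.ofReal (2 * Real.exp (τ * (r * matOpNorm (B i)) ^ 2 / 2)) := by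
    intro i
    have hmap : ∫⁻ ω, g i ω ∂P
        = ∫⁻ x, φ i x ∂(P.map (Z i)) := (lintegral_map (hφmeas i) (hZmeas i)).symm
    rw [hmap, hZlaw i]
    exact aux_gauss_abs_mgf_le τ _
  calc ∫⁻ ω, ENNReal.ofReal
        (matOpNorm (NormedSpace.exp ((τ : ℝ) • C + ∑ i, Z i ω • B i)) ^ r) ∂P
      ≤ ∫⁻ ω, ENNReal.ofReal (Real.exp (r * matOpNorm C * τ)) * ∏ i, g i ω ∂P :=
        lintegral_mono hpt
    _ = ENNReal.ofReal (Real.exp (r * matOpNorm C * τ)) * ∫⁻ ω, ∏ i, g i ω ∂P :=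
        lintegral_const_mul _ (Finset.measurable_prod _ fun i _ => hgmeas i)
    _ = ENNReal.ofReal (Real.exp (r * matOpNorm C * τ)) * ∏ i, ∫⁻ ω, g i ω ∂P := by
        rw [aux_lintegral_prod P g hgmeas hgindep Finset.univ]
    _ ≤ ENNReal.ofReal (Real.exp (r * matOpNorm C * τ)) *
          ∏ i, ENNReal.ofReal (2 * Real.exp (τ * (r * matOpNorm (B i)) ^ 2 / 2)) :=
        mul_le_mul_right (Finset.prod_le_prod' fun i _ => hgint i) _
    _ = ENNReal.ofReal (2 ^ m *
          Real.exp (r * matOpNorm C * τ + (r ^ 2 * τ / 2) * ∑ i, matOpNorm (B i) ^ 2)) := by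
        rw [← ENNReal.ofReal_prod_of_nonneg (fun i _ => by positivity),
          ← ENNReal.ofReal_mul (Real.exp_nonneg _)]
        congr 1
        rw [Finset.prod_mul_distrib, Finset.prod_const, ← Real.exp_sum,
          Finset.card_univ, Fintype.card_fin]
        have hsum : ∑ i, (τ:ℝ) * (r * matOpNorm (B i)) ^ 2 / 2
            = r ^ 2 * τ / 2 * ∑ i, matOpNorm (B i) ^ 2 := by
          rw [Finset.mul_sum]
          exact Finset.sum_congr rfl fun i _ => by ring
        rw [hsum, Real.exp_add]
        ring
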